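/- arXiv:2508.10363 — 2 statements merged into one kernel-verified Lean document; each statement's English description precedes it below -/
import Mathlib

section
/- (Asymptotic convergence to the unique source.) Let α > 0, β > 0. Let p : ℝ² → ℝ be continuously differentiable with 0 < p(x) ≤ 1 for all x, p(x_s) = 1 at a unique point x_s, p(x) < 1 for x ≠ x_s, ∇p(x) = 0 only at x = x_s, and p(x) → 0 as ‖x‖ → ∞. Let x : [0,∞) → ℝ² be a continuously differentiable trajectory satisfying x'(t) = g(x(t)) for all t ≥ 0, where g(x) = (β·α·(-log p(x))^{α-1}/p(x))·∇p(x) for p(x) < 1 and g(x_s) = 0. Then x(t) → x_s as t → ∞. -/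
/-- The planar environment ℝ². -/
abbrev Env : Type := EuclideanSpace ℝ (Fin 2)

/-- Asymptotic convergence to the unique source: for α, β > 0, if p is continuously
differentiable, 0 < p ≤ 1 everywhere, p(x_s) = 1 at a unique point x_s (p < 1 elsewhere),
∇p = 0 only at x_s, and p(x) → 0 as ‖x‖ → ∞, then every trajectory of
x' = g(x), where g(x) = (β·α·(-log p(x))^(α-1)/p(x)) · ∇p(x) for p(x) < 1 and
g(x_s) = 0, converges to x_s. -/
theorem asymptotic_convergence_to_source (α β : ℝ) (hα : 0 < α) (hβ : 0 < β)
    (p : Env → ℝ) (xs : Env) (hp : ContDiff ℝ 1 p)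
    (hpos : ∀ x, 0 < p x) (hle : ∀ x, p x ≤ 1)
    (hmax : p xs = 1) (hlt : ∀ x, x ≠ xs → p x < 1)
    (hcrit : ∀ x, gradient p x = 0 → x = xs)
    (hdecay : Filter.Tendsto p (Filter.comap (fun x : Env => ‖x‖) Filter.atTop) (nhds 0))
    (g : Env → Env)
    (hg : ∀ x, p x < 1 →
      g x = (β * α * (-Real.log (p x)) ^ (α - 1) / p x) • gradient p x)
    (hgs : g xs = 0)
    (x : ℝ → Env) (hxC1 : ContDiff ℝ 1 x)
    (hx : ∀ t : ℝ, 0 ≤ t → HasDerivAt x (g (x t)) t) :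
    Filter.Tendsto x Filter.atTop (nhds xs) := by
  classical
  set V : ℝ → ℝ := fun t => p (x t) with hV
  set c : Env → ℝ := fun y => β * α * (-Real.log (p y)) ^ (α - 1) / p y with hc
  set h : Env → ℝ := fun y => c y * ‖gradient p y‖ ^ 2 with hh
  have hpd : ∀ y, DifferentiableAt ℝ p y := fun y => hp.differentiable one_ne_zero y
  -- inner product with gradient equals fderiv
  have hinner : ∀ (y v : Env), (inner ℝ (gradient p y) v : ℝ) = fderiv ℝ p y v := by
    intro y v
    simp [gradient, InnerProductSpace.toDual_symm_apply]
  -- c is positive away from xs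
  have hcpos : ∀ y, y ≠ xs → 0 < c y := by
    intro y hy
    have hlog : Real.log (p y) < 0 := Real.log_neg (hpos y) (hlt y hy)
    have : (0:ℝ) < -Real.log (p y) := by linarith
    exact div_pos (mul_pos (mul_pos hβ hα) (Real.rpow_pos_of_pos this _)) (hpos y)
  -- value of the inner product
  have hval : ∀ y, y ≠ xs → (inner ℝ (gradient p y) (g y) : ℝ) = h y := by
    intro y hy
    rw [hg y (hlt y hy), real_inner_smul_right, real_inner_self_eq_norm_sq]
  have hvals : (inner ℝ (gradient p xs) (g xs) : ℝ) = 0 := by rw [hgs, inner_zero_right]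
  have hinn_nonneg : ∀ y, 0 ≤ (inner ℝ (gradient p y) (g y) : ℝ) := by
    intro y
    by_cases hy : y = xs
    · rw [hy, hvals]
    · rw [hval y hy]
      exact mul_nonneg (hcpos y hy).le (sq_nonneg _)
  -- derivative of V
  have hVd : ∀ t : ℝ, 0 ≤ t →
      HasDerivAt V ((inner ℝ (gradient p (x t)) (g (x t)) : ℝ)) t := by
    intro t ht
    have := ((hpd (x t)).hasFDerivAt).comp_hasDerivAt t (hx t ht)
    rw [hinner]
    exact this
  have hVcont : Continuous V := hp.continuous.comp hxC1.continuous
  -- V is monotone on [0, ∞)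
  have hVmono : MonotoneOn V (Set.Ici 0) := by
    apply monotoneOn_of_deriv_nonneg (convex_Ici 0) hVcont.continuousOn
    · intro t ht
      rw [interior_Ici] at ht
      exact ((hVd t ht.le).differentiableAt).differentiableWithinAt
    · intro t ht
      rw [interior_Ici] at ht
      rw [(hVd t ht.le).deriv]
      exact hinn_nonneg _
  -- boundedness of superlevel sets
  have hball : ∀ cl : ℝ, 0 < cl → ∃ R : ℝ, ∀ y : Env, cl ≤ p y → ‖y‖ ≤ R := by
    intro cl hcl
    have h1 : ∀ᶠ y in Filter.comap (fun x : Env => ‖x‖) Filter.atTop, p y < cl :=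
      hdecay.eventually_lt_const hcl
    rw [Filter.eventually_comap] at h1
    rw [Filter.eventually_atTop] at h1
    obtain ⟨R, hR⟩ := h1
    refine ⟨R, fun y hy => ?_⟩
    by_contra hcon
    push_neg at hcon
    exact absurd hy (not_le.mpr (hR ‖y‖ hcon.le y rfl))
  -- limit of V
  have hV0pos : 0 < V 0 := hpos _
  set W : ℝ → ℝ := fun t => V (max t 0) with hW
  have hWmono : Monotone W := fun a b hab =>
    hVmono (Set.mem_Ici.mpr (le_max_right a 0)) (Set.mem_Ici.mpr (le_max_right b 0))
      (max_le_max hab le_rfl)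
  have hWbdd : BddAbove (Set.range W) := by
    refine ⟨1, ?_⟩
    rintro _ ⟨t, rfl⟩
    exact hle _
  set L : ℝ := ⨆ t, W t with hLdef
  have hWt : Filter.Tendsto W Filter.atTop (nhds L) := tendsto_atTop_ciSup hWmono hWbdd
  have hVt : Filter.Tendsto V Filter.atTop (nhds L) := by
    apply hWt.congr'
    filter_upwards [Filter.eventually_ge_atTop (0:ℝ)] with t ht
    simp [hW, max_eq_left ht]
  have hVleL : ∀ t : ℝ, 0 ≤ t → V t ≤ L := by
    intro t ht
    have h1 : W t ≤ L := le_ciSup hWbdd t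
    simpa [hW, max_eq_left ht] using h1
  have hL1 : L ≤ 1 := ciSup_le fun t => hle _
  -- continuity of the gradient
  have hgc : Continuous fun y => gradient p y := by
    have h1 : Continuous fun y => fderiv ℝ p y := hp.continuous_fderiv one_ne_zero
    exact ((InnerProductSpace.toDual ℝ Env).symm.continuous).comp h1
  -- L = 1
  have hLeq : L = 1 := by
    by_contra hLne
    have hLlt : L < 1 := lt_of_le_of_ne hL1 hLne
    set K : Set Env := {y | V 0 ≤ p y ∧ p y ≤ L} with hK
    have hKx : ∀ t : ℝ, 0 ≤ t → x t ∈ K :=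
      fun t ht => ⟨hVmono (Set.mem_Ici.mpr le_rfl) (Set.mem_Ici.mpr ht) ht, hVleL t ht⟩
    have hKne : K.Nonempty := ⟨x 0, hKx 0 le_rfl⟩
    have hKnex : ∀ y ∈ K, y ≠ xs := by
      rintro y hy rfl
      have := hy.2
      rw [hmax] at this
      exact absurd this (not_le.mpr hLlt)
    have hKclosed : IsClosed K :=
      (isClosed_le continuous_const hp.continuous).inter
        (isClosed_le hp.continuous continuous_const)
    have hKbdd : Bornology.IsBounded K := by
      obtain ⟨R, hR⟩ := hball (V 0) hV0pos
      exact (Metric.isBounded_iff_subset_closedBall 0).mpr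
        ⟨R, fun y hy => by simpa [Metric.mem_closedBall] using hR y hy.1⟩
    have hKcomp : IsCompact K := Metric.isCompact_of_isClosed_isBounded hKclosed hKbdd
    have hhcont : ContinuousOn h K := by
      intro y hy
      have hy1 : p y < 1 := hlt y (hKnex y hy)
      have hlogc : ContinuousAt (fun z => -Real.log (p z)) y :=
        ((Real.continuousAt_log (hpos y).ne').comp hp.continuous.continuousAt).neg
      have hrpow : ContinuousAt (fun z => (-Real.log (p z)) ^ (α - 1)) y := by
        have hlog : Real.log (p y) < 0 := Real.log_neg (hpos y) hy1
        exact hlogc.rpow_const (Or.inl (by intro hz; rw [neg_eq_zero] at hz; exact absurd hz hlog.ne))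
      have hcc : ContinuousAt c y :=
        ((continuousAt_const.mul hrpow).div hp.continuous.continuousAt (hpos y).ne')
      exact ((hcc.mul ((hgc.norm.pow 2).continuousAt)).continuousWithinAt)
    obtain ⟨y0, hy0K, hy0min⟩ := hKcomp.exists_isMinOn hKne hhcont
    set δ : ℝ := h y0 with hδ
    have hy0ne : y0 ≠ xs := hKnex y0 hy0K
    have hδpos : 0 < δ := by
      apply mul_pos (hcpos y0 hy0ne)
      have hgne : gradient p y0 ≠ 0 := fun hz => hy0ne (hcrit y0 hz)
      exact pow_pos (norm_pos_iff.mpr hgne) 2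
    -- F t = V t - δ t is monotone on [0, ∞)
    have hFd : ∀ t : ℝ, 0 ≤ t →
        HasDerivAt (fun s => V s - δ * s) ((inner ℝ (gradient p (x t)) (g (x t)) : ℝ) - δ) t := by
      intro t ht
      exact (hVd t ht).sub (by simpa using (hasDerivAt_id t).const_mul δ)
    have hFcont : Continuous (fun s => V s - δ * s) := hVcont.sub (continuous_const.mul continuous_id)
    have hFmono : MonotoneOn (fun s => V s - δ * s) (Set.Ici 0) := by
      apply monotoneOn_of_deriv_nonneg (convex_Ici 0) hFcont.continuousOn
      · intro t ht
        rw [interior_Ici] at ht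
        exact ((hFd t ht.le).differentiableAt).differentiableWithinAt
      · intro t ht
        rw [interior_Ici] at ht
        rw [(hFd t ht.le).deriv]
        have hxt := hKx t ht.le
        have hxtne : x t ≠ xs := hKnex _ hxt
        rw [hval _ hxtne]
        have := hy0min hxt
        simp only [sub_nonneg]
        exact le_trans (le_of_eq rfl) this
    set T : ℝ := (2 - V 0) / δ with hT
    have hTnonneg : 0 ≤ T := div_nonneg (by have := hle (x 0); simp only [hV] at *; linarith) hδpos.le
    have hge := hFmono (Set.mem_Ici.mpr le_rfl) (Set.mem_Ici.mpr hTnonneg) hTnonneg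
    have hδT : δ * T = 2 - V 0 := by
      rw [hT, mul_div_cancel₀ _ hδpos.ne']
    have hVT : V T ≤ 1 := hle _
    simp only at hge
    rw [hδT] at hge
    linarith
  -- now V → 1; conclude convergence
  rw [Metric.tendsto_atTop]
  intro ε hε
  set C : Set Env := {y | V 0 ≤ p y ∧ ε ≤ dist y xs} with hC
  have hCclosed : IsClosed C :=
    (isClosed_le continuous_const hp.continuous).inter
      (isClosed_le continuous_const (continuous_id.dist continuous_const))
  have hCbdd : Bornology.IsBounded C := by
    obtain ⟨R, hR⟩ := hball (V 0) hV0pos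
    exact (Metric.isBounded_iff_subset_closedBall 0).mpr
      ⟨R, fun y hy => by simpa [Metric.mem_closedBall] using hR y hy.1⟩
  have hCcomp : IsCompact C := Metric.isCompact_of_isClosed_isBounded hCclosed hCbdd
  rcases C.eq_empty_or_nonempty with hCe | hCne
  · obtain ⟨N, hN⟩ := Filter.eventually_atTop.mp (Filter.eventually_ge_atTop (0:ℝ))
    refine ⟨N, fun t ht => ?_⟩
    have ht0 : 0 ≤ t := hN t ht
    have hxt : V 0 ≤ p (x t) := hVmono (Set.mem_Ici.mpr le_rfl) (Set.mem_Ici.mpr ht0) ht0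
    by_contra hcon
    push_neg at hcon
    have : x t ∈ C := ⟨hxt, hcon⟩
    rw [hCe] at this
    exact this
  · obtain ⟨y0, hy0C, hy0max⟩ := hCcomp.exists_isMaxOn hCne hp.continuous.continuousOn
    have hy0ne : y0 ≠ xs := by
      intro hz
      have := hy0C.2
      rw [hz, dist_self] at this
      linarith
    have hm1 : p y0 < 1 := hlt y0 hy0ne
    have hev : ∀ᶠ t in Filter.atTop, p y0 < V t := by
      apply Filter.Tendsto.eventually_const_lt _ hVt
      rw [hLeq]; exact hm1
    obtain ⟨N1, hN1⟩ := Filter.eventually_atTop.mp hev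
    refine ⟨max N1 0, fun t ht => ?_⟩
    have ht0 : 0 ≤ t := le_trans (le_max_right N1 0) ht
    have htN1 : N1 ≤ t := le_trans (le_max_left N1 0) ht
    have hxt : V 0 ≤ p (x t) := hVmono (Set.mem_Ici.mpr le_rfl) (Set.mem_Ici.mpr ht0) ht0
    by_contra hcon
    push_neg at hcon
    have hmem : x t ∈ C := ⟨hxt, hcon⟩
    have hle2 := hy0max hmem
    have h2 := hN1 t htN1
    simp only [Set.mem_setOf_eq] at hle2
    simp only [hV] at h2
    linarith
end

section
/- Let α > 0, β > 0, let p : ℝ² → ℝ be continuously differentiable, let ω : ℝ → ℝ² be a disturbance with ‖ω(t)‖ ≤ ω̄ for all t, and let x : ℝ → ℝ² be a differentiable trajectory satisfying the disturbed control law x'(t) = g(x(t)) + ω(t) with 0 < p(x(t)) < 1 along the trajectory, where g(x) = ∇ log(w(p(x))). Then the Lyapunov candidate V(x) = -log(w(p(x))) satisfies, along the trajectory, d/dt V(x(t)) = -‖g(x(t))‖² - ⟨g(x(t)), ω(t)⟩ ≤ -(1/2)‖g(x(t))‖² + (1/2)ω̄² for all t. -/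
open scoped RealInnerProductSpace

/-- Prelec's probability weighting function. -/
noncomputable def prelecW (α β p : ℝ) : ℝ := Real.exp (-β * (-Real.log p) ^ α)

/-- The Lyapunov candidate V(x) = -log(w(p(x))). -/
noncomputable def lyapV (α β : ℝ) (p : Env → ℝ) (x : Env) : ℝ :=
  -Real.log (prelecW α β (p x))

/-- The source-seeking velocity field g(x) = ∇ log(w(p(x))). -/
noncomputable def seekField (α β : ℝ) (p : Env → ℝ) (x : Env) : Env :=
  gradient (fun y => Real.log (prelecW α β (p y))) x

/-- Along any trajectory of the disturbed control law x' = g(x) + ω with ‖ω(t)‖ ≤ ω̄ and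
0 < p < 1 on the trajectory, the Lyapunov candidate V = -log(w(p(·))) satisfies
d/dt V(x(t)) = -‖g(x(t))‖² - ⟨g(x(t)), ω(t)⟩ ≤ -(1/2)‖g(x(t))‖² + (1/2)ω̄². -/
theorem lyapV_disturbed_derivative_bound (α β : ℝ) (hα : 0 < α) (hβ : 0 < β)
    (p : Env → ℝ) (hp : ContDiff ℝ 1 p)
    (ω : ℝ → Env) (ωbar : ℝ) (hω : ∀ t : ℝ, ‖ω t‖ ≤ ωbar)
    (x : ℝ → Env)
    (hx : ∀ t : ℝ, HasDerivAt x (seekField α β p (x t) + ω t) t)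
    (hrange : ∀ t : ℝ, 0 < p (x t) ∧ p (x t) < 1) :
    ∀ t : ℝ,
      HasDerivAt (fun s => lyapV α β p (x s))
        (-‖seekField α β p (x t)‖ ^ 2 - ⟪seekField α β p (x t), ω t⟫) t ∧
      -‖seekField α β p (x t)‖ ^ 2 - ⟪seekField α β p (x t), ω t⟫ ≤
        -(1 / 2) * ‖seekField α β p (x t)‖ ^ 2 + (1 / 2) * ωbar ^ 2 := by
  intro t
  set F : Env → ℝ := fun y => Real.log (prelecW α β (p y)) with hFdef
  have hFeq : F = fun y => -β * (-Real.log (p y)) ^ α := by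
    funext y; simp [hFdef, prelecW, Real.log_exp]
  obtain ⟨hc0, hc1⟩ := hrange t
  have hlogne : -Real.log (p (x t)) ≠ 0 := by
    have : Real.log (p (x t)) < 0 := Real.log_neg hc0 hc1
    linarith
  have hpd : DifferentiableAt ℝ p (x t) := (hp.differentiable one_ne_zero).differentiableAt
  have hF : DifferentiableAt ℝ F (x t) := by
    rw [hFeq]
    exact ((hpd.log (ne_of_gt hc0)).neg.rpow_const (Or.inl hlogne)).const_mul _
  set g : Env := seekField α β p (x t) with hgdef
  have hgrad : HasGradientAt F g (x t) := hF.hasGradientAt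
  have hchain : HasDerivAt (fun s => F (x s)) ⟪g, seekField α β p (x t) + ω t⟫ t := by
    have := hgrad.hasFDerivAt.comp_hasDerivAt t (hx t)
    simp [InnerProductSpace.toDual_apply_apply] at this
    exact this
  have hinner : ⟪g, seekField α β p (x t) + ω t⟫ = ‖g‖ ^ 2 + ⟪g, ω t⟫ := by
    rw [inner_add_right, ← hgdef, real_inner_self_eq_norm_sq]
  have hV : HasDerivAt (fun s => lyapV α β p (x s)) (-‖g‖ ^ 2 - ⟪g, ω t⟫) t := by
    have h := hchain.neg
    rw [hinner] at h
    have he : -(‖g‖ ^ 2 + ⟪g, ω t⟫) = -‖g‖ ^ 2 - ⟪g, ω t⟫ := by ring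
    rw [he] at h
    exact h
  refine ⟨hV, ?_⟩
  have h1 : |⟪g, ω t⟫| ≤ ‖g‖ * ‖ω t‖ := abs_real_inner_le_norm g (ω t)
  have h2 := hω t
  have h3 : (0:ℝ) ≤ ‖g‖ := norm_nonneg _
  have h4 : (0:ℝ) ≤ ‖ω t‖ := norm_nonneg _
  have h5 : -⟪g, ω t⟫ ≤ ‖g‖ * ‖ω t‖ := by
    have := abs_le.mp h1
    linarith [this.1]
  nlinarith [sq_nonneg (‖g‖ - ‖ω t‖), sq_nonneg (‖g‖ - ωbar)]
end
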